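/- The set C_A is a closed convex cone in ℝ^N; that is, C_A is closed (with respect to any norm on ℝ^N, e.g. ‖·‖_∞), convex, and satisfies λb ∈ C_A for every b ∈ C_A and every λ ≥ 0. -/

import Mathlib

open Finset


lemma cone_caratheodory {E : Type*} [AddCommGroup E] [Module ℝ E]
    {ι : Type*} [DecidableEq ι] (v : ι → E) (t : Finset ι) :
    ∀ (c : ι → ℝ), (∀ i ∈ t, 0 ≤ c i) →
    ∃ s : Finset ι, s ⊆ t ∧ LinearIndependent ℝ (fun i : s => v i) ∧
      ∃ c' : ι → ℝ, (∀ i, 0 ≤ c' i) ∧ ∑ i ∈ s, c' i • v i = ∑ i ∈ t, c i • v i := by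
  induction t using Finset.strongInduction with
  | _ t ih =>
    intro c hc
    by_cases hli : LinearIndependent ℝ (fun i : t => v i)
    · refine ⟨t, le_refl _, hli, fun i => max (c i) 0, fun i => le_max_right _ _, ?_⟩
      exact Finset.sum_congr rfl fun i hi => by simp [max_eq_left (hc i hi)]
    · obtain ⟨g, hgsum, i1, hg1⟩ := Fintype.not_linearIndependent_iff.1 hli
      set d : ι → ℝ := fun j => if h : j ∈ t then g ⟨j, h⟩ else 0 with hd
      have hdsum : ∑ j ∈ t, d j • v j = 0 := by
        rw [← Finset.sum_attach t (fun j => d j • v j)]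
        rw [← hgsum]
        exact Finset.sum_congr rfl fun x _ => by simp [hd, x.2]
      have key : ∀ e : ι → ℝ, (∑ j ∈ t, e j • v j = 0) → (∃ j ∈ t, 0 < e j) →
          ∃ s : Finset ι, s ⊆ t ∧ LinearIndependent ℝ (fun i : s => v i) ∧
            ∃ c' : ι → ℝ, (∀ i, 0 ≤ c' i) ∧ ∑ i ∈ s, c' i • v i = ∑ i ∈ t, c i • v i := by
        intro e hesum ⟨j1, hj1t, hj1⟩
        have hTne : (t.filter (fun j => 0 < e j)).Nonempty :=
          ⟨j1, Finset.mem_filter.2 ⟨hj1t, hj1⟩⟩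
        obtain ⟨i0, hi0T, hmin⟩ :=
          Finset.exists_min_image (t.filter (fun j => 0 < e j)) (fun j => c j / e j) hTne
        obtain ⟨hi0t, hi0pos⟩ := Finset.mem_filter.1 hi0T
        set ρ : ℝ := c i0 / e i0 with hρ
        have hρ0 : 0 ≤ ρ := div_nonneg (hc i0 hi0t) hi0pos.le
        set c'' : ι → ℝ := fun j => c j - ρ * e j with hc''
        have hc''nn : ∀ j ∈ t, 0 ≤ c'' j := by
          intro j hj
          by_cases hej : 0 < e j
          · have := hmin j (Finset.mem_filter.2 ⟨hj, hej⟩)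
            have := (le_div_iff₀ hej).1 this
            simpa [hc''] using this
          · have : ρ * e j ≤ 0 := mul_nonpos_of_nonneg_of_nonpos hρ0 (not_lt.1 hej)
            have := hc j hj
            simp only [hc'', sub_nonneg]
            linarith
        have hc''sum : ∑ j ∈ t, c'' j • v j = ∑ j ∈ t, c j • v j := by
          simp only [hc'', sub_smul, Finset.sum_sub_distrib, mul_smul]
          rw [← Finset.smul_sum, hesum, smul_zero, sub_zero]
        have hc''i0 : c'' i0 = 0 := by
          simp [hc'', hρ, div_mul_cancel₀ _ (ne_of_gt hi0pos)]
        obtain ⟨s, hs, hsli, c', hc', hc'sum⟩ :=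
          ih (t.erase i0) (Finset.erase_ssubset hi0t) c''
            (fun j hj => hc''nn j (Finset.mem_of_mem_erase hj))
        refine ⟨s, hs.trans (Finset.erase_subset _ _), hsli, c', hc', ?_⟩
        rw [hc'sum, Finset.sum_erase _ (by rw [hc''i0, zero_smul]), hc''sum]
      rcases (ne_iff_lt_or_gt.1 hg1) with hneg | hpos
      · refine key (fun j => -d j) (by simp only [neg_smul, Finset.sum_neg_distrib, hdsum, neg_zero]) ?_
        exact ⟨i1, i1.2, by simpa [hd, i1.2] using neg_pos.2 hneg⟩
      · exact key d hdsum ⟨i1, i1.2, by simpa [hd, i1.2] using hpos⟩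


lemma isClosed_cone_of_li {M : Type*} [NormedAddCommGroup M] [NormedSpace ℝ M] [T2Space M]
    {ι : Type*} [Fintype ι] (v : ι → M) (hv : LinearIndependent ℝ v) :
    IsClosed {x : M | ∃ c : ι → ℝ, (∀ i, 0 ≤ c i) ∧ ∑ i, c i • v i = x} := by
  let f : (ι → ℝ) →ₗ[ℝ] M :=
    { toFun := fun c => ∑ i, c i • v i
      map_add' := fun c1 c2 => by simp [add_smul, Finset.sum_add_distrib]
      map_smul' := fun r c => by simp [smul_smul, Finset.smul_sum] }
  have hker : LinearMap.ker f = ⊥ := by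
    rw [LinearMap.ker_eq_bot']
    intro m hm
    exact funext fun i => Fintype.linearIndependent_iff.1 hv m hm i
  have hemb := LinearMap.isClosedEmbedding_of_injective hker
  have hset : {x : M | ∃ c : ι → ℝ, (∀ i, 0 ≤ c i) ∧ ∑ i, c i • v i = x}
      = f '' {c : ι → ℝ | ∀ i, 0 ≤ c i} := by
    ext x
    simp only [Set.mem_image, Set.mem_setOf_eq]
    exact ⟨fun ⟨c, h1, h2⟩ => ⟨c, h1, h2⟩, fun ⟨c, h1, h2⟩ => ⟨c, h1, h2⟩⟩
  rw [hset]
  refine hemb.isClosedMap _ ?_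
  rw [Set.setOf_forall]
  exact isClosed_iInter fun i => isClosed_le continuous_const (continuous_apply i)

lemma isClosed_coneFam {M : Type*} [NormedAddCommGroup M] [NormedSpace ℝ M] [T2Space M]
    {ι : Type*} [Fintype ι] [DecidableEq ι] (v : ι → M) :
    IsClosed {x : M | ∃ c : ι → ℝ, (∀ i, 0 ≤ c i) ∧ ∑ i, c i • v i = x} := by
  have hset : {x : M | ∃ c : ι → ℝ, (∀ i, 0 ≤ c i) ∧ ∑ i, c i • v i = x}
      = ⋃ s ∈ {s : Finset ι | LinearIndependent ℝ (fun i : s => v i)},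
          {x : M | ∃ c : s → ℝ, (∀ i, 0 ≤ c i) ∧ ∑ i, c i • v (i : ι) = x} := by
    ext x
    simp only [Set.mem_iUnion, Set.mem_setOf_eq]
    constructor
    · rintro ⟨c, hc, hsum⟩
      obtain ⟨s, -, hli, c', hc', hsum'⟩ :=
        cone_caratheodory v Finset.univ c (fun i _ => hc i)
      refine ⟨s, hli, fun i => c' i, fun i => hc' i, ?_⟩
      rw [Finset.sum_coe_sort s (fun i => c' i • v i), hsum']
      exact hsum
    · rintro ⟨s, hli, c, hc, hsum⟩
      refine ⟨fun j => if h : j ∈ s then c ⟨j, h⟩ else 0, ?_, ?_⟩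
      · intro j
        by_cases h : j ∈ s <;> simp [h, hc]
      · rw [← Finset.sum_subset (Finset.subset_univ s)
          (fun j _ hj => by simp [hj])]
        rw [← Finset.sum_coe_sort s (fun j => (if h : j ∈ s then c ⟨j, h⟩ else 0) • v j)]
        rw [← hsum]
        exact Finset.sum_congr rfl fun j _ => by simp [j.2]
  rw [hset]
  exact Set.Finite.isClosed_biUnion (Set.toFinite _)
    (fun s hs => isClosed_cone_of_li _ hs)
open scoped RealInnerProductSpace

noncomputable section

/-- `Q_{A,b} = {x ∈ ℝ^d : a_iᵀx ≤ b_i for all i}`. -/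
def Qset {d N : ℕ} (a : Fin N → EuclideanSpace ℝ (Fin d)) (b : Fin N → ℝ) :
    Set (EuclideanSpace ℝ (Fin d)) :=
  {x | ∀ i, ⟪a i, x⟫ ≤ b i}

/-- `C_A = {b : for every i there is x ∈ Q_{A,b} with a_iᵀx = b_i}`. -/
def CA {d N : ℕ} (a : Fin N → EuclideanSpace ℝ (Fin d)) : Set (Fin N → ℝ) :=
  {b | ∀ i, ∃ x ∈ Qset a b, ⟪a i, x⟫ = b i}

/-- The linear map `x ↦ (⟪a j, x⟫)_j`. -/
def Amap {d N : ℕ} (a : Fin N → EuclideanSpace ℝ (Fin d)) :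
    EuclideanSpace ℝ (Fin d) →ₗ[ℝ] (Fin N → ℝ) :=
  LinearMap.pi fun j => ((innerSL ℝ (a j)).toLinearMap)

lemma Amap_apply {d N : ℕ} (a : Fin N → EuclideanSpace ℝ (Fin d))
    (x : EuclideanSpace ℝ (Fin d)) (j : Fin N) : Amap a x j = ⟪a j, x⟫ := rfl

/-- Generators of the cone `S_i`. -/
def vfam {d N : ℕ} (a : Fin N → EuclideanSpace ℝ (Fin d)) (i : Fin N) :
    (Fin d ⊕ (Fin d ⊕ Fin N)) → (Fin N → ℝ)
  | Sum.inl k => Amap a (EuclideanSpace.single k 1)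
  | Sum.inr (Sum.inl k) => -(Amap a (EuclideanSpace.single k 1))
  | Sum.inr (Sum.inr j) => if j = i then 0 else Pi.single j 1

lemma single_sum {d : ℕ} (x : EuclideanSpace ℝ (Fin d)) :
    ∑ k, x k • EuclideanSpace.single k (1 : ℝ) = x := by
  ext m
  simp only [PiLp.ext_iff] at *
  rw [WithLp.ofLp_sum, Finset.sum_apply]
  simp [EuclideanSpace.single_apply, PiLp.smul_apply, Finset.sum_ite_eq']

lemma pi_single_sum {N : ℕ} (w : Fin N → ℝ) :
    ∑ j, w j • (Pi.single j (1 : ℝ) : Fin N → ℝ) = w := by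
  ext m
  rw [Finset.sum_apply]
  simp [Pi.single_apply, Finset.sum_ite_eq']

lemma sum_smul_Amap {d N : ℕ} (a : Fin N → EuclideanSpace ℝ (Fin d))
    (w : EuclideanSpace ℝ (Fin d)) :
    ∑ k, w k • Amap a (EuclideanSpace.single k (1:ℝ)) = Amap a w := by
  have : ∑ k, w k • Amap a (EuclideanSpace.single k (1:ℝ))
      = Amap a (∑ k, w k • EuclideanSpace.single k (1:ℝ)) := by
    rw [map_sum]
    exact Finset.sum_congr rfl fun k _ => (map_smul _ _ _).symm
  rw [this, single_sum]

lemma mem_cone_iff {d N : ℕ} (a : Fin N → EuclideanSpace ℝ (Fin d)) (i : Fin N)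
    (b : Fin N → ℝ) :
    (∃ x ∈ Qset a b, ⟪a i, x⟫ = b i) ↔
      ∃ c : Fin d ⊕ (Fin d ⊕ Fin N) → ℝ, (∀ l, 0 ≤ c l) ∧ ∑ l, c l • vfam a i l = b := by
  constructor
  · rintro ⟨x, hxQ, hxi⟩
    refine ⟨Sum.elim (fun k => max (x k) 0)
      (Sum.elim (fun k => max (-(x k)) 0) (fun j => b j - ⟪a j, x⟫)), ?_, ?_⟩
    · rintro (k | k | j)
      · exact le_max_right _ _
      · exact le_max_right _ _
      · simpa [sub_nonneg] using hxQ j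
    · rw [Fintype.sum_sum_type, Fintype.sum_sum_type, ← add_assoc]
      simp only [Sum.elim_inl, Sum.elim_inr]
      have h1 : ∑ k, max (x k) 0 • vfam a i (Sum.inl k)
          + ∑ k, max (-(x k)) 0 • vfam a i (Sum.inr (Sum.inl k)) = Amap a x := by
        simp only [vfam, smul_neg]
        rw [← Finset.sum_add_distrib]
        have : ∀ k : Fin d, max (x k) 0 • Amap a (EuclideanSpace.single k 1)
            + -(max (-(x k)) 0 • Amap a (EuclideanSpace.single k 1))
            = x k • Amap a (EuclideanSpace.single k 1) := fun k => by
          rw [← sub_eq_add_neg, ← sub_smul, max_zero_sub_max_neg_zero_eq_self]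
        rw [Finset.sum_congr rfl fun k _ => this k, sum_smul_Amap]
      have h2 : ∑ j, (b j - ⟪a j, x⟫) • vfam a i (Sum.inr (Sum.inr j))
          = b - Amap a x := by
        have hterm : ∀ j : Fin N, (b j - ⟪a j, x⟫) • vfam a i (Sum.inr (Sum.inr j))
            = (b j - Amap a x j) • (Pi.single j (1:ℝ) : Fin N → ℝ) := by
          intro j
          by_cases h : j = i
          · subst h
            simp [vfam, Amap_apply, hxi]
          · simp [vfam, h, Amap_apply]
        rw [Finset.sum_congr rfl fun j _ => hterm j,
          pi_single_sum (fun j => b j - Amap a x j)]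
        rfl
      rw [h1, h2, add_sub_cancel]
  · rintro ⟨c, hc, hsum⟩
    set x : EuclideanSpace ℝ (Fin d) :=
      ∑ k, (c (Sum.inl k) - c (Sum.inr (Sum.inl k))) • EuclideanSpace.single k (1:ℝ) with hx
    set r : Fin N → ℝ :=
      ∑ j, c (Sum.inr (Sum.inr j)) • vfam a i (Sum.inr (Sum.inr j)) with hr
    have hb : b = Amap a x + r := by
      rw [← hsum, Fintype.sum_sum_type, Fintype.sum_sum_type, ← add_assoc, hr]
      congr 1
      have : ∀ k : Fin d, c (Sum.inl k) • vfam a i (Sum.inl k)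
          + c (Sum.inr (Sum.inl k)) • vfam a i (Sum.inr (Sum.inl k))
          = (c (Sum.inl k) - c (Sum.inr (Sum.inl k)))
              • Amap a (EuclideanSpace.single k (1:ℝ)) := fun k => by
        simp only [vfam, smul_neg, sub_smul]
        rw [sub_eq_add_neg]
      rw [← Finset.sum_add_distrib, Finset.sum_congr rfl fun k _ => this k,
        hx, map_sum]
      exact Finset.sum_congr rfl fun k _ => (map_smul _ _ _).symm
    have hrval : ∀ m, r m = ∑ j, c (Sum.inr (Sum.inr j))
        * (if j = i then (0:ℝ) else (Pi.single j (1:ℝ) : Fin N → ℝ) m) := by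
      intro m
      rw [hr, Finset.sum_apply]
      refine Finset.sum_congr rfl fun j _ => ?_
      by_cases h : j = i <;> simp [vfam, h]
    have hrnn : ∀ m, 0 ≤ r m := by
      intro m
      rw [hrval]
      refine Finset.sum_nonneg fun j _ => ?_
      by_cases h : j = i
      · simp [h]
      · by_cases h2 : m = j
        · simp [h, h2, Pi.single_apply, hc]
        · simp [h, Pi.single_apply, h2]
    have hri : r i = 0 := by
      rw [hrval]
      refine Finset.sum_eq_zero fun j _ => ?_
      by_cases h : j = i
      · simp [h]
      · simp [h, Pi.single_apply, fun hh : i = j => h hh.symm]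
    refine ⟨x, fun j => ?_, ?_⟩
    · have := hrnn j
      rw [← Amap_apply]
      have hbj : b j = Amap a x j + r j := by rw [hb]; rfl
      linarith
    · rw [← Amap_apply]
      have hbi : b i = Amap a x i + r i := by rw [hb]; rfl
      rw [hbi, hri, add_zero]
theorem stmt_7 (d N : ℕ) (hd : 1 ≤ d) (hN : 1 ≤ N)
    (a : Fin N → EuclideanSpace ℝ (Fin d))
    (ha_inj : Function.Injective a) (ha_norm : ∀ i, ‖a i‖ = 1) :
    IsClosed (CA a) ∧ Convex ℝ (CA a) ∧
      (∀ b ∈ CA a, ∀ lam : ℝ, 0 ≤ lam → lam • b ∈ CA a) := by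
  refine ⟨?_, ?_, ?_⟩
  · have hCA : CA a = ⋂ i, {b : Fin N → ℝ | ∃ c : Fin d ⊕ (Fin d ⊕ Fin N) → ℝ,
        (∀ l, 0 ≤ c l) ∧ ∑ l, c l • vfam a i l = b} := by
      ext b
      simp only [CA, Set.mem_setOf_eq, Set.mem_iInter]
      exact forall_congr' fun i => mem_cone_iff a i b
    rw [hCA]
    exact isClosed_iInter fun i => isClosed_coneFam _
  · intro b1 hb1 b2 hb2 t1 t2 ht1 ht2 hts i
    obtain ⟨x1, hx1Q, hx1⟩ := hb1 i
    obtain ⟨x2, hx2Q, hx2⟩ := hb2 i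
    simp only [Qset, Set.mem_setOf_eq] at hx1Q hx2Q
    refine ⟨t1 • x1 + t2 • x2, fun j => ?_, ?_⟩
    · rw [inner_add_right, real_inner_smul_right, real_inner_smul_right]
      have h1 := mul_le_mul_of_nonneg_left (hx1Q j) ht1
      have h2 := mul_le_mul_of_nonneg_left (hx2Q j) ht2
      have : (t1 • b1 + t2 • b2) j = t1 * b1 j + t2 * b2 j := by
        simp [Pi.add_apply, Pi.smul_apply, smul_eq_mul]
      rw [this]
      linarith
    · rw [inner_add_right, real_inner_smul_right, real_inner_smul_right, hx1, hx2]
      simp [Pi.add_apply, Pi.smul_apply, smul_eq_mul]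
  · intro b hb lam hlam i
    obtain ⟨x, hxQ, hx⟩ := hb i
    simp only [Qset, Set.mem_setOf_eq] at hxQ
    refine ⟨lam • x, fun j => ?_, ?_⟩
    · rw [real_inner_smul_right]
      have := mul_le_mul_of_nonneg_left (hxQ j) hlam
      simpa [Pi.smul_apply, smul_eq_mul] using this
    · rw [real_inner_smul_right, hx]
      simp [Pi.smul_apply, smul_eq_mul]
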